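/- arXiv:1504.01842 — 2 statements merged into one kernel-verified Lean document; each statement's English description precedes it below -/
import Mathlib

section
/- Side-effect safety of typable sequential DEX steps: if a DEX execution step ⟨i, ρ, h⟩ ⇝ ⟨i', ρ', h'⟩ is taken by an instruction other than invoke, and the instruction is typable at program point i with method heap-effect level k_h (in particular, for iput the constraint k_h ≤ ft(f) holds, and object/array allocations use fresh locations), then h ≼_{k_h} h'. -/
/-- Heaps are partial maps from locations to objects (field maps; array
cells are treated analogously to fields). -/
abbrev Heap (L F V : Type*) := L → Option (F → V)

/-- Side-effect preorder `h ≼_k h'`. -/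
def SEPre {L F V Sec : Type*} [Lattice Sec] (ft : F → Sec) (k : Sec)
    (h h' : Heap L F V) : Prop :=
  (∀ l, (h l).isSome → (h' l).isSome) ∧
  (∀ l o o', h l = some o → h' l = some o' → ∀ f, ¬ k ≤ ft f → o f = o' f)

/-- DEX instructions (heap-relevant fragment). -/
inductive Instr (F : Type*) where
  | const | move | goto | ifeq | binop | iget
  | new | newarray
  | iput (f : F) | aput (f : F)
  | invoke

/-- The effect of an instruction on the heap according to the DEX
operational semantics: const/move/goto/ifeq/binop/iget leave the heap
unchanged; new/newarray extend the heap at a fresh location; iput/aput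
update a field (resp. array cell) of an existing location. -/
def HeapEffect {L F V : Type*} [DecidableEq L] [DecidableEq F] :
    Instr F → Heap L F V → Heap L F V → Prop
  | .const, h, h' => h' = h
  | .move, h, h' => h' = h
  | .goto, h, h' => h' = h
  | .ifeq, h, h' => h' = h
  | .binop, h, h' => h' = h
  | .iget, h, h' => h' = h
  | .new, h, h' => ∃ l o, h l = none ∧ h' = Function.update h l (some o)
  | .newarray, h, h' => ∃ l o, h l = none ∧ h' = Function.update h l (some o)
  | .iput f, h, h' => ∃ l o v, h l = some o ∧
      h' = Function.update h l (some (Function.update o f v))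
  | .aput f, h, h' => ∃ l o v, h l = some o ∧
      h' = Function.update h l (some (Function.update o f v))
  | .invoke, _, _ => True

/-- The typing constraint on the heap-effect level `k_h`: for iput (and
analogously aput) the rule requires `k_h ≤ ft f`. -/
def TypableConstraint {F Sec : Type*} [Lattice Sec] (ft : F → Sec) (kh : Sec) :
    Instr F → Prop
  | .iput f => kh ≤ ft f
  | .aput f => kh ≤ ft f
  | _ => True

/-- side-effect safety of typable non-invoke DEX steps. -/
theorem stmt10 {L F V Sec : Type*} [Lattice Sec] [DecidableEq L] [DecidableEq F]
    (ft : F → Sec) (kh : Sec) (ins : Instr F) (h h' : Heap L F V)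
    (hnoinvoke : ins ≠ Instr.invoke)
    (hstep : HeapEffect ins h h')
    (htyp : TypableConstraint ft kh ins) :
    SEPre ft kh h h' := by
  have eqcase : ∀ {g : Heap L F V}, SEPre ft kh g g := by
    intro g
    exact ⟨fun l hl => hl, fun l o o' ho ho' f _ => by rw [ho] at ho'; cases ho'; rfl⟩
  have newcase : ∀ (g : Heap L F V) l o, g l = none →
      SEPre ft kh g (Function.update g l (some o)) := by
    intro g l o hl
    constructor
    · intro x hx
      by_cases hxl : x = l
      · simp [hxl, Function.update]
      · simpa [Function.update, hxl] using hx
    · intro x o1 o2 h1 h2 f _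
      by_cases hxl : x = l
      · rw [hxl, hl] at h1; cases h1
      · rw [Function.update_of_ne hxl, h1] at h2; cases h2; rfl
  cases ins with
  | invoke => exact absurd rfl hnoinvoke
  | const => rw [hstep]; exact eqcase
  | move => rw [hstep]; exact eqcase
  | goto => rw [hstep]; exact eqcase
  | ifeq => rw [hstep]; exact eqcase
  | binop => rw [hstep]; exact eqcase
  | iget => rw [hstep]; exact eqcase
  | new => obtain ⟨l, o, hl, rfl⟩ := hstep; exact newcase h l o hl
  | newarray => obtain ⟨l, o, hl, rfl⟩ := hstep; exact newcase h l o hl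
  | iput f =>
      obtain ⟨l, o, v, hl, rfl⟩ := hstep
      constructor
      · intro x hx
        by_cases hxl : x = l
        · subst hxl; simp
        · simpa [Function.update_of_ne hxl] using hx
      · intro x o1 o2 h1 h2 g hg
        by_cases hxl : x = l
        · subst hxl
          rw [hl] at h1; cases h1
          rw [Function.update_self] at h2; cases h2
          rw [Function.update_of_ne]
          intro hgf; exact hg (hgf ▸ htyp)
        · rw [Function.update_of_ne hxl, h1] at h2; cases h2; rfl
  | aput f =>
      obtain ⟨l, o, v, hl, rfl⟩ := hstep
      constructor
      · intro x hx
        by_cases hxl : x = l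
        · subst hxl; simp
        · simpa [Function.update_of_ne hxl] using hx
      · intro x o1 o2 h1 h2 g hg
        by_cases hxl : x = l
        · subst hxl
          rw [hl] at h1; cases h1
          rw [Function.update_self] at h2; cases h2
          rw [Function.update_of_ne]
          intro hgf; exact hg (hgf ▸ htyp)
        · rw [Function.update_of_ne hxl, h1] at h2; cases h2; rfl
end

section
/- Changed register is high: under the same setting, if during an execution trace ⟨i0, ρ0⟩ ⇝ ⋯ ⇝ ⟨ik, ρk⟩ with se(i_j) ≰ k_obs for all j, the value of register r is changed by at least one instruction in the trace, then RT_{ik}(r) ≰ k_obs. -/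
/-- changed register is high.  Along a typable execution trace
of length `k` with high security environment throughout, every step either
leaves register `r` untouched (value and type) or assigns it a type at
least the current `se`; if the value of `r` changes at some step, then its
final type is high. -/
theorem stmt17 {Sec R V : Type*} [Lattice Sec]
    (kobs : Sec) (k : ℕ) (RT : ℕ → R → Sec) (ρ : ℕ → R → V)
    (sej : ℕ → Sec) (r : R)
    (hse : ∀ j ≤ k, ¬ sej j ≤ kobs)
    (hstep : ∀ j < k,
      (ρ (j + 1) r = ρ j r ∧ RT (j + 1) r = RT j r) ∨ sej j ≤ RT (j + 1) r)
    (hchanged : ∃ j < k, ρ (j + 1) r ≠ ρ j r) :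
    ¬ RT k r ≤ kobs := by
  obtain ⟨j, hj, hne⟩ := hchanged
  have hj1 : ¬ RT (j + 1) r ≤ kobs := by
    rcases hstep j hj with ⟨hv, _⟩ | hle
    · exact absurd hv hne
    · exact fun h => hse j (le_of_lt hj) (hle.trans h)
  -- high stays high
  have key : ∀ m, j + 1 ≤ m → m ≤ k → ¬ RT m r ≤ kobs := by
    intro m
    induction m with
    | zero => omega
    | succ n ih =>
      intro h1 h2
      rcases Nat.lt_or_ge j n with hlt | hge
      · rcases hstep n (by omega) with ⟨_, ht⟩ | hle
        · rw [ht]; exact ih (by omega) (by omega)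
        · exact fun h => hse n (by omega) (hle.trans h)
      · have : j = n := by omega
        subst this; exact hj1
  exact key k (by omega) le_rfl
end
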